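/- arXiv:1807.01423 — 2 statements merged into one kernel-verified Lean document; each statement's English description precedes it below -/
import Mathlib

section
/- Let q < 0, μ < 0, p > 0, and E < -½q². Define Q(x) = ((p+2)|E|/(2|μ|))^{1/p} · cosh^{-2/p}( p√(|E|/2)|x| + arctanh(|q|/√(2|E|)) ). Then Q is even and satisfies the jump condition Q'(0+) - Q'(0-) = 2q Q(0). -/
noncomputable def arctanh (x : ℝ) : ℝ := (1/2) * Real.log ((1 + x) / (1 - x))

lemma sinh_arctanh {t : ℝ} (h0 : -1 < t) (h1 : t < 1) :
    Real.sinh (arctanh t) = t * Real.cosh (arctanh t) := by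
  have hu : 0 < (1 + t) / (1 - t) := div_pos (by linarith) (by linarith)
  set u := (1 + t) / (1 - t) with hud
  have he : Real.exp (arctanh t) = u ^ (1/2 : ℝ) := by
    rw [arctanh, Real.rpow_def_of_pos hu, mul_comm]
  have hs : 0 < u ^ (1/2 : ℝ) := Real.rpow_pos_of_pos hu _
  have hss : u ^ (1/2 : ℝ) * u ^ (1/2 : ℝ) = u := by
    rw [← Real.rpow_add hu]; norm_num
  rw [Real.sinh_eq, Real.cosh_eq, Real.exp_neg, he]
  have h1t : (1 : ℝ) - t ≠ 0 := by linarith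
  field_simp
  rw [sq, hss, hud]
  field_simp
  ring

/-- The explicit focusing nonlinear bound state is even and satisfies the jump condition
`Q'(0+) - Q'(0-) = 2q Q(0)`. -/
theorem focusing_bound_state_jump (q μ p E : ℝ) (hq : q < 0) (hμ : μ < 0) (hp : 0 < p)
    (hE : E < -(1/2) * q^2)
    (Q : ℝ → ℝ)
    (hQ : ∀ x, Q x = ((p + 2) * |E| / (2 * |μ|)) ^ (1/p) *
      (Real.cosh (p * Real.sqrt (|E| / 2) * |x| + arctanh (|q| / Real.sqrt (2 * |E|))))
        ^ (-(2/p))) :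
    (∀ x : ℝ, Q (-x) = Q x) ∧
    ∃ dplus dminus : ℝ,
      HasDerivWithinAt Q dplus (Set.Ici 0) 0 ∧
      HasDerivWithinAt Q dminus (Set.Iic 0) 0 ∧
      dplus - dminus = 2 * q * Q 0 := by
  have heven : ∀ x : ℝ, Q (-x) = Q x := by
    intro x; rw [hQ, hQ, abs_neg]
  refine ⟨heven, q * Q 0, -(q * Q 0), ?_, ?_, by ring⟩
  all_goals {
    set C : ℝ := ((p + 2) * |E| / (2 * |μ|)) ^ (1/p) with hC
    set a : ℝ := p * Real.sqrt (|E| / 2) with ha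
    set t : ℝ := |q| / Real.sqrt (2 * |E|) with ht
    set b : ℝ := arctanh t with hb
    set r : ℝ := -(2/p) with hr
    -- basic positivity facts
    have hEneg : E < 0 := lt_of_lt_of_le hE (by nlinarith [sq_nonneg q])
    have hEabs : |E| = -E := abs_of_neg hEneg
    have hEpos : 0 < |E| := abs_pos.mpr (ne_of_lt hEneg)
    have h2E : q ^ 2 < 2 * |E| := by rw [hEabs]; nlinarith
    have hsq : 0 < Real.sqrt (2 * |E|) := Real.sqrt_pos.mpr (by linarith)
    have htlt : t < 1 := by
      rw [ht, div_lt_one hsq]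
      have := Real.sqrt_lt_sqrt (sq_nonneg q) h2E
      rwa [Real.sqrt_sq_eq_abs] at this
    have ht0 : 0 ≤ t := div_nonneg (abs_nonneg q) hsq.le
    have hcosh : 0 < Real.cosh b := Real.cosh_pos b
    -- the smooth function g(x) = C * cosh(a x + b)^r
    have hg : HasDerivAt (fun x : ℝ => C * Real.cosh (a * x + b) ^ r)
        (C * (r * Real.cosh b ^ (r - 1) * (Real.sinh b * a))) 0 := by
      have h1 : HasDerivAt (fun x : ℝ => a * x + b) a 0 := by
        simpa using ((hasDerivAt_id (0:ℝ)).const_mul a).add_const b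
      have h2 : HasDerivAt Real.cosh (Real.sinh b) (a * 0 + b) := by
        simpa using Real.hasDerivAt_cosh (a * 0 + b)
      have h3 : HasDerivAt (fun y : ℝ => y ^ r) (r * Real.cosh b ^ (r - 1))
          (Real.cosh (a * 0 + b)) := by
        simpa using Real.hasDerivAt_rpow_const (x := Real.cosh b) (p := r)
          (Or.inl (ne_of_gt hcosh))
      have h4 := (h3.comp 0 (h2.comp 0 h1)).const_mul C
      simpa [Function.comp, mul_assoc] using h4
    -- the key value computation: g'(0) = q * Q 0
    have hkey : C * (r * Real.cosh b ^ (r - 1) * (Real.sinh b * a)) = q * Q 0 := by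
      have hsinh : Real.sinh b = t * Real.cosh b :=
        sinh_arctanh (lt_of_lt_of_le (by norm_num) ht0) htlt
      have hpow : Real.cosh b ^ (r - 1) * Real.cosh b = Real.cosh b ^ r := by
        nth_rewrite 2 [(Real.rpow_one (Real.cosh b)).symm]
        rw [← Real.rpow_add hcosh]; ring_nf
      have hrat : r * t * a = q := by
        have h4 : Real.sqrt 4 = 2 := by
          rw [show (4:ℝ) = 2^2 by norm_num]; exact Real.sqrt_sq (by norm_num)
        have h242 : Real.sqrt (|E| / 2) = Real.sqrt (2 * |E|) / 2 := by
          rw [show |E| / 2 = (2 * |E|) / 4 by ring, Real.sqrt_div (by positivity) 4, h4]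
        rw [hr, ht, ha, abs_of_neg hq, h242]
        field_simp
      rw [hQ]
      simp only [abs_zero, mul_zero, zero_add]
      rw [hsinh]
      rw [show C * (r * Real.cosh b ^ (r - 1) * (t * Real.cosh b * a))
          = (r * t * a) * (C * (Real.cosh b ^ (r - 1) * Real.cosh b)) by ring, hpow, hrat]
      try rw [← hC, ← ha, ← ht, ← hb, ← hr]
      try ring
    first
    | { -- dplus on Ici 0
        refine ((hg.hasDerivWithinAt).congr ?_ ?_).congr_deriv hkey
        · intro y hy
          rw [hQ, abs_of_nonneg hy]
        · rw [hQ]; simp }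
    | { -- dminus on Iic 0
        have hgneg : HasDerivAt (fun x : ℝ => C * Real.cosh (a * (-x) + b) ^ r)
            (-(C * (r * Real.cosh b ^ (r - 1) * (Real.sinh b * a)))) 0 := by
          have hn : HasDerivAt (fun x : ℝ => -x) (-1 : ℝ) 0 := by
            exact hasDerivAt_neg (0:ℝ)
          have := HasDerivAt.comp (x := (0:ℝ)) (by simpa using hg) hn
          exact this.congr_deriv (by ring)
        refine ((hgneg.hasDerivWithinAt).congr ?_ ?_).congr_deriv (by rw [hkey])
        · intro y hy
          rw [hQ, abs_of_nonpos hy]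
        · rw [hQ]; simp }
  }
end

section
/- Let q < 0, μ > 0, and 0 < p < 4. Define Q(x) = ((p+2)q²/(μ(p|q||x|+2)²))^{1/p}. Then Q ∈ L²(ℝ) and Q satisfies -½Q''(x) + μQ(x)^{p+1} = 0 for all x > 0. -/
open MeasureTheory

/-- The zero-energy bound state `Q(x) = ((p+2)q²/(μ(p|q||x|+2)²))^{1/p}` for the
defocusing NLS with attractive delta potential lies in `L²(ℝ)` (for `0 < p < 4`) and
solves `-½Q'' + μ Q^{p+1} = 0` for `x > 0`. -/
theorem zero_energy_bound_state (q μ p : ℝ) (hq : q < 0) (hμ : 0 < μ)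
    (hp₁ : 0 < p) (hp₂ : p < 4)
    (Q : ℝ → ℝ)
    (hQ : ∀ x, Q x = ((p + 2) * q^2 / (μ * (p * |q| * |x| + 2)^2)) ^ (1/p)) :
    MemLp Q 2 (volume : Measure ℝ) ∧
    ∀ x : ℝ, 0 < x → -(1/2) * deriv (deriv Q) x + μ * Q x ^ (p + 1) = 0 := by
  have hqne : q ≠ 0 := ne_of_lt hq
  have hpne : p ≠ 0 := ne_of_gt hp₁
  set a : ℝ := p * |q| with ha
  have ha0 : 0 < a := mul_pos hp₁ (abs_pos.mpr hqne)
  set B : ℝ := (p + 2) * q ^ 2 / μ with hB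
  have hB0 : 0 < B := by
    apply div_pos _ hμ
    have : 0 < q ^ 2 := by positivity
    nlinarith
  set A : ℝ := B ^ (1 / p) with hA
  have hA0 : 0 < A := Real.rpow_pos_of_pos hB0 _
  set r : ℝ := -(2 / p) with hr
  -- rewrite Q
  have key : ∀ x : ℝ, Q x = A * (a * |x| + 2) ^ r := by
    intro x
    have hD : 0 < a * |x| + 2 := by positivity
    have h1 : (p + 2) * q ^ 2 / (μ * (a * |x| + 2) ^ 2)
        = B * ((a * |x| + 2) ^ (2:ℕ))⁻¹ := by
      rw [hB]; field_simp
    rw [hQ x, h1, Real.mul_rpow hB0.le (by positivity),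
      ← Real.rpow_natCast (a * |x| + 2) 2, ← Real.rpow_neg hD.le,
      ← Real.rpow_mul hD.le, ← hA]
    congr 1
    rw [hr]
    push_cast
    ring
  have hApow : A ^ p = B := by
    rw [hA, ← Real.rpow_mul hB0.le, one_div, inv_mul_cancel₀ hpne, Real.rpow_one]
  -- the scalar identity
  have hscalar : μ * A ^ (p + 1) = (1/2) * A * r * (r - 1) * a ^ 2 := by
    have hA1 : A ^ (p + 1) = B * A := by
      rw [Real.rpow_add hA0, hApow, Real.rpow_one]
    have ha2 : a ^ 2 = p ^ 2 * q ^ 2 := by rw [ha, mul_pow, sq_abs]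
    rw [hA1, hB, ha2, hr]
    field_simp
    ring
  constructor
  · -- integrability
    have hQcont : Continuous Q := by
      have : Q = fun x => A * (a * |x| + 2) ^ r := funext key
      rw [this]
      exact continuous_const.mul <| (Continuous.rpow_const (by continuity)
        (fun x => Or.inl (by positivity)))
    rw [memLp_two_iff_integrable_sq hQcont.aestronglyMeasurable]
    set c : ℝ := min a 2 with hc
    have hc0 : 0 < c := lt_min ha0 two_pos
    have hgint : Integrable (fun x : ℝ =>
        A ^ 2 * c ^ (r * 2) * (1 + ‖x‖) ^ (-(4 / p))) (volume : Measure ℝ) := by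
      apply Integrable.const_mul
      apply integrable_one_add_norm (E := ℝ)
      rw [Module.finrank_self]
      push_cast
      rw [lt_div_iff₀ hp₁]
      linarith
    apply hgint.mono' ((hQcont.mul hQcont).aestronglyMeasurable.congr _)
    · filter_upwards with x
      have hE : 0 < a * |x| + 2 := by positivity
      have hcle : c * (1 + |x|) ≤ a * |x| + 2 := by
        have h1 : c ≤ a := min_le_left _ _
        have h2 : c ≤ 2 := min_le_right _ _
        nlinarith [abs_nonneg x]
      have hr2 : r * 2 ≤ 0 := by
        rw [hr]; nlinarith [div_pos two_pos hp₁ ]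
      have hcx : 0 < c * (1 + |x|) := by positivity
      calc ‖Q x ^ 2‖ = A ^ 2 * ((a * |x| + 2) ^ r) ^ 2 := by
            rw [Real.norm_eq_abs, abs_of_nonneg (sq_nonneg _), key x, mul_pow]
        _ = A ^ 2 * (a * |x| + 2) ^ (r * 2) := by
            rw [← Real.rpow_natCast ((a * |x| + 2) ^ r) 2, ← Real.rpow_mul hE.le]
            norm_num
        _ ≤ A ^ 2 * (c * (1 + |x|)) ^ (r * 2) := by
            apply mul_le_mul_of_nonneg_left _ (by positivity)
            exact Real.rpow_le_rpow_of_nonpos hcx hcle hr2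
        _ = A ^ 2 * c ^ (r * 2) * (1 + ‖x‖) ^ (-(4 / p)) := by
            rw [Real.mul_rpow hc0.le (by positivity), Real.norm_eq_abs]
            have : -(4 / p) = r * 2 := by rw [hr]; ring
            rw [this]; ring
    · filter_upwards with x
      exact (sq (Q x)).symm ▸ rfl
  · -- the ODE
    intro x hx
    have hev : ∀ y : ℝ, 0 < y → Q =ᶠ[nhds y] fun z => A * (a * z + 2) ^ r := by
      intro y hy
      filter_upwards [Ioi_mem_nhds hy] with z hz
      rw [key z, abs_of_pos hz]
    have hder : ∀ y : ℝ, 0 < y →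
        HasDerivAt (fun z => A * (a * z + 2) ^ r)
          (A * (r * (a * y + 2) ^ (r - 1) * a)) y := by
      intro y hy
      have hE : a * y + 2 ≠ 0 := by positivity
      have h1 : HasDerivAt (fun z : ℝ => a * z + 2) a y := by
        simpa using ((hasDerivAt_id y).const_mul a).add_const 2
      have h2 := (Real.hasDerivAt_rpow_const (x := a * y + 2) (p := r)
        (Or.inl hE)).comp y h1
      exact h2.const_mul A
    have hderivQ : ∀ y : ℝ, 0 < y →
        deriv Q y = A * r * a * (a * y + 2) ^ (r - 1) := by
      intro y hy
      rw [(hev y hy).deriv_eq, (hder y hy).deriv]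
      ring
    have hder2 : HasDerivAt (fun z => A * r * a * (a * z + 2) ^ (r - 1))
        (A * r * a * ((r - 1) * (a * x + 2) ^ (r - 1 - 1) * a)) x := by
      have hE : a * x + 2 ≠ 0 := by positivity
      have h1 : HasDerivAt (fun z : ℝ => a * z + 2) a x := by
        simpa using ((hasDerivAt_id x).const_mul a).add_const 2
      exact ((Real.hasDerivAt_rpow_const (x := a * x + 2) (p := r - 1)
        (Or.inl hE)).comp x h1).const_mul (A * r * a)
    have hevd : deriv Q =ᶠ[nhds x] fun z => A * r * a * (a * z + 2) ^ (r - 1) := by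
      filter_upwards [Ioi_mem_nhds hx] with z hz
      exact hderivQ z hz
    have hd2 : deriv (deriv Q) x
        = A * r * a * ((r - 1) * (a * x + 2) ^ (r - 1 - 1) * a) := by
      rw [hevd.deriv_eq, hder2.deriv]
    have hE : 0 < a * x + 2 := by positivity
    have hQpow : Q x ^ (p + 1) = A ^ (p + 1) * (a * x + 2) ^ (r - 1 - 1) := by
      rw [key x, abs_of_pos hx, Real.mul_rpow hA0.le (Real.rpow_nonneg hE.le _),
        ← Real.rpow_mul hE.le]
      congr 1
      rw [hr]
      field_simp
      ring
    rw [hd2, hQpow]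
    linear_combination (a * x + 2) ^ (r - 1 - 1) * hscalar
end
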